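/- Let E ⊆ ℝ^d and h ∈ 𝒟. If ℋ^h(E) = 0, then there exists g ∈ 𝒟 with g ≺ h such that ℋ^g(E) = 0. -/

import Mathlib

open Set Metric Filter Topology
open scoped ENNReal

/-- `h` is a dimension function: continuous and nondecreasing on `(0,∞)`, positive
there, and tending to `0` as `t → 0⁺`. -/
def IsDimFun (h : ℝ → ℝ) : Prop :=
  ContinuousOn h (Ioi 0) ∧ MonotoneOn h (Ioi 0) ∧ (∀ t, 0 < t → 0 < h t) ∧
    Tendsto h (𝓝[>] (0:ℝ)) (𝓝 0)

/-- `g ≺ h` : `g` is a smaller dimension than `h`, i.e. `lim_{t→0⁺} h(t)/g(t) = 0`. -/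
def DimLT (g h : ℝ → ℝ) : Prop :=
  Tendsto (fun t => h t / g t) (𝓝[>] (0:ℝ)) (𝓝 0)

/-- `h ∈ 𝒟_d`: `h` is a doubling, at most `d`-dimensional dimension function. -/
def IsDimFunD (d : ℕ) (h : ℝ → ℝ) : Prop :=
  IsDimFun h ∧ (∃ c₀ > (0:ℝ), ∀ t > (0:ℝ), t ^ d ≤ c₀ * h t) ∧
    ∃ c₁ > (0:ℝ), ∀ t > (0:ℝ), h (2 * t) ≤ c₁ * h t

/-- `P_δ^h(E)`: supremum of `∑ h(|Bᵢ|)` over countable `δ`-packings of `E`, where a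
`δ`-packing is a countable collection of pairwise disjoint open balls centered at
points of `E` with diameters (`= 2r`) less than `δ`. -/
noncomputable def packingPre (d : ℕ) (h : ℝ → ℝ) (δ : ℝ)
    (E : Set (EuclideanSpace ℝ (Fin d))) : ℝ≥0∞ :=
  ⨆ (c : ℕ → EuclideanSpace ℝ (Fin d)) (r : ℕ → ℝ) (s : Set ℕ)
    (_ : ∀ i ∈ s, c i ∈ E) (_ : ∀ i ∈ s, 0 < r i) (_ : ∀ i ∈ s, 2 * r i < δ)
    (_ : s.PairwiseDisjoint fun i => ball (c i) (r i)),
    ∑' i : s, ENNReal.ofReal (h (2 * r (i : ℕ)))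

/-- The packing premeasure `P_0^h(E) = inf_{δ>0} P_δ^h(E)`. -/
noncomputable def packingPre0 (d : ℕ) (h : ℝ → ℝ)
    (E : Set (EuclideanSpace ℝ (Fin d))) : ℝ≥0∞ :=
  ⨅ (δ : ℝ) (_ : 0 < δ), packingPre d h δ E

/-- The packing measure `𝒫^h(E)`. -/
noncomputable def packingMeasure (d : ℕ) (h : ℝ → ℝ)
    (E : Set (EuclideanSpace ℝ (Fin d))) : ℝ≥0∞ :=
  ⨅ (F : ℕ → Set (EuclideanSpace ℝ (Fin d))) (_ : E ⊆ ⋃ j, F j),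
    ∑' j, packingPre0 d h (F j)

/-- `E` has non-σ-finite `𝒫^h` measure: `E` is not a countable union of sets of
finite `𝒫^h` measure. -/
def NonSigmaFinitePacking (d : ℕ) (h : ℝ → ℝ)
    (E : Set (EuclideanSpace ℝ (Fin d))) : Prop :=
  ¬ ∃ F : ℕ → Set (EuclideanSpace ℝ (Fin d)),
      E ⊆ ⋃ j, F j ∧ ∀ j, packingMeasure d h (F j) < ⊤

/-- `A ⊆ ℝ^d` is analytic: a continuous image of `ℕ^ℕ`. -/
def IsAnalyticSet' (d : ℕ) (A : Set (EuclideanSpace ℝ (Fin d))) : Prop :=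
  ∃ φ : (ℕ → ℕ) → EuclideanSpace ℝ (Fin d), Continuous φ ∧ A = Set.range φ

/-- The Hausdorff measure on `ℝ^d` associated to the gauge (dimension) function `h`. -/
noncomputable def hausdorffGauge (d : ℕ) (h : ℝ → ℝ) :
    MeasureTheory.Measure (EuclideanSpace ℝ (Fin d)) :=
  MeasureTheory.Measure.mkMetric (fun r : ℝ≥0∞ => ENNReal.ofReal (h r.toReal))


/-! ### Auxiliary lemmas -/

lemma covers_of_mkMetric_zero {X : Type*} [EMetricSpace X] [MeasurableSpace X] [BorelSpace X]
    (m : ℝ≥0∞ → ℝ≥0∞) (E : Set X) (h0 : MeasureTheory.Measure.mkMetric m E = 0)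
    {r ε : ℝ≥0∞} (hr : 0 < r) (hε : 0 < ε) :
    ∃ t : ℕ → Set X, E ⊆ ⋃ n, t n ∧ (∀ n, EMetric.diam (t n) ≤ r) ∧
      ∑' n, ⨆ _ : (t n).Nonempty, m (EMetric.diam (t n)) ≤ ε := by
  rw [MeasureTheory.Measure.mkMetric_apply] at h0
  have h1 : (⨅ (t : ℕ → Set X) (_ : E ⊆ iUnion t) (_ : ∀ n, EMetric.diam (t n) ≤ r),
      ∑' n, ⨆ _ : (t n).Nonempty, m (EMetric.diam (t n))) = 0 := by
    refine le_antisymm ?_ (zero_le)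
    rw [← h0]
    exact le_iSup₂ (f := fun r (_ : 0 < r) => ⨅ (t : ℕ → Set X) (_ : E ⊆ iUnion t)
      (_ : ∀ n, EMetric.diam (t n) ≤ r), ∑' n, ⨆ _ : (t n).Nonempty, m (EMetric.diam (t n))) r hr
  have h2 : (⨅ (t : ℕ → Set X) (_ : E ⊆ iUnion t) (_ : ∀ n, EMetric.diam (t n) ≤ r),
      ∑' n, ⨆ _ : (t n).Nonempty, m (EMetric.diam (t n))) < ε := h1 ▸ hε
  obtain ⟨t, ht⟩ := iInf_lt_iff.1 h2
  obtain ⟨ht1, ht2⟩ := iInf_lt_iff.1 ht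
  obtain ⟨ht3, ht4⟩ := iInf_lt_iff.1 ht2
  exact ⟨t, ht1, ht3, ht4.le⟩

lemma mkMetric_zero_of_covers {X : Type*} [EMetricSpace X] [MeasurableSpace X] [BorelSpace X]
    (m : ℝ≥0∞ → ℝ≥0∞) (E : Set X)
    (H : ∀ r : ℝ≥0∞, 0 < r → ∀ ε : ℝ≥0∞, 0 < ε → ∃ t : ℕ → Set X, E ⊆ ⋃ n, t n ∧
      (∀ n, EMetric.diam (t n) ≤ r) ∧ ∑' n, ⨆ _ : (t n).Nonempty, m (EMetric.diam (t n)) ≤ ε) :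
    MeasureTheory.Measure.mkMetric m E = 0 := by
  rw [MeasureTheory.Measure.mkMetric_apply]
  refine le_antisymm (iSup₂_le fun r hr => ?_) (zero_le)
  refine ENNReal.le_of_forall_pos_le_add fun ε hε _ => ?_
  obtain ⟨t, ht1, ht2, ht3⟩ := H r hr ε (by exact_mod_cast hε)
  rw [zero_add]
  calc (⨅ (t : ℕ → Set X) (_ : E ⊆ iUnion t) (_ : ∀ n, EMetric.diam (t n) ≤ r),
      ∑' n, ⨆ _ : (t n).Nonempty, m (EMetric.diam (t n)))
      ≤ ∑' n, ⨆ _ : (t n).Nonempty, m (EMetric.diam (t n)) := by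
        exact iInf₂_le_of_le t ht1 (iInf_le_of_le ht2 le_rfl)
    _ ≤ ε := ht3


lemma tail_small (f : ℕ → ℝ≥0∞) (d : ℕ → ℝ) (hf : ∑' n, f n ≠ ⊤)
    {ε : ℝ≥0∞} (hε : 0 < ε) :
    ∃ τ : ℝ, 0 < τ ∧ ∑' n, Set.indicator {i | 0 < d i ∧ d i ≤ τ} f n ≤ ε := by
  classical
  set S : ℝ≥0∞ := ∑' n, Set.indicator {i | 0 < d i} f n with hS
  have hSle : S ≤ ∑' n, f n := ENNReal.tsum_le_tsum fun n => Set.indicator_le_self _ _ n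
  have hStop : S ≠ ⊤ := fun h => hf (top_le_iff.1 (h ▸ hSle))
  by_cases hcase : S ≤ ε
  · exact ⟨1, one_pos, le_trans (ENNReal.tsum_le_tsum fun n =>
      Set.indicator_le_indicator_of_subset (fun i hi => hi.1) (fun _ => zero_le) n) hcase⟩
  push_neg at hcase
  have hlt : S - ε < S := ENNReal.sub_lt_self hStop (hε.trans hcase).ne' hε.ne'
  rw [hS, ENNReal.tsum_eq_iSup_sum] at hlt
  conv at hlt => rw [lt_iSup_iff]
  obtain ⟨F, hF⟩ := hlt
  set F' : Finset ℕ := F.filter (fun i => 0 < d i) with hF'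
  have hsumF : ∑ a ∈ F, Set.indicator {i | 0 < d i} f a = ∑ a ∈ F', f a := by
    rw [hF', Finset.sum_filter]
    refine Finset.sum_congr rfl fun i _ => ?_
    by_cases hi : 0 < d i <;> simp [Set.indicator, hi]
  by_cases hne : F'.Nonempty
  swap
  · rw [Finset.not_nonempty_iff_eq_empty] at hne
    rw [hsumF, hne, Finset.sum_empty] at hF
    exact absurd hF (by simp)
  set τ : ℝ := (F'.inf' hne d) / 2 with hτ
  have hinfpos : 0 < F'.inf' hne d := by
    obtain ⟨i, hi, hieq⟩ := Finset.exists_mem_eq_inf' hne d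
    rw [hieq]
    exact (Finset.mem_filter.1 hi).2
  have hτpos : 0 < τ := by rw [hτ]; linarith
  refine ⟨τ, hτpos, ?_⟩
  have key : ∀ n, Set.indicator {i | 0 < d i ∧ d i ≤ τ} f n
      + Set.indicator (↑F' : Set ℕ) f n ≤ Set.indicator {i | 0 < d i} f n := by
    intro n
    by_cases h1 : n ∈ {i | 0 < d i ∧ d i ≤ τ}
    · have h2 : n ∉ (↑F' : Set ℕ) := by
        intro h2
        have hle : F'.inf' hne d ≤ d n := Finset.inf'_le d (Finset.mem_coe.1 h2)
        have := h1.2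
        rw [hτ] at this
        linarith
      simp [Set.indicator_of_mem h1, Set.indicator_of_notMem h2,
        Set.indicator_of_mem (show n ∈ {i | 0 < d i} from h1.1)]
    · rw [Set.indicator_of_notMem h1, zero_add]
      by_cases h2 : n ∈ (↑F' : Set ℕ)
      · have : 0 < d n := (Finset.mem_filter.1 (Finset.mem_coe.1 h2)).2
        simp [Set.indicator_of_mem h2, Set.indicator_of_mem (show n ∈ {i | 0 < d i} from this)]
      · simp [Set.indicator_of_notMem h2]
  have hindsum : ∑' n, Set.indicator (↑F' : Set ℕ) f n = ∑ a ∈ F', f a := by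
    rw [tsum_eq_sum (s := F') (fun b hb => Set.indicator_of_notMem (by simpa using hb) f)]
    exact Finset.sum_congr rfl fun i hi => Set.indicator_of_mem (by simpa using hi) f
  have hsum : (∑' n, Set.indicator {i | 0 < d i ∧ d i ≤ τ} f n) + ∑ a ∈ F', f a ≤ S := by
    rw [← hindsum, ← ENNReal.tsum_add]
    exact ENNReal.tsum_le_tsum key
  rw [hsumF] at hF
  rw [show (⨆ s, ∑ a ∈ s, Set.indicator {i | 0 < d i} f a) = S by rw [hS, ENNReal.tsum_eq_iSup_sum]] at hF
  have hεtop : ε ≠ ⊤ := fun h => hStop (top_le_iff.1 (h ▸ hcase.le))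
  have hFtop : ∑ a ∈ F', f a ≠ ⊤ := by
    intro h
    apply hStop
    rw [← hindsum] at h
    exact top_le_iff.1 (h ▸ ENNReal.tsum_le_tsum fun n =>
      Set.indicator_le_indicator_of_subset (fun i hi => (Finset.mem_filter.1 (Finset.mem_coe.1 hi)).2)
        (fun _ => zero_le) n)
  have hchain : (∑' n, Set.indicator {i | 0 < d i ∧ d i ≤ τ} f n) + ∑ a ∈ F', f a
      < ε + ∑ a ∈ F', f a := by
    calc _ ≤ S := hsum
      _ = (S - ε) + ε := (tsub_add_cancel_of_le hcase.le).symm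
      _ < ∑ a ∈ F', f a + ε := ENNReal.add_lt_add_right hεtop hF
      _ = ε + ∑ a ∈ F', f a := add_comm _ _
  rw [add_comm _ (∑ a ∈ F', f a), add_comm ε (∑ a ∈ F', f a)] at hchain
  exact le_of_lt ((ENNReal.add_lt_add_iff_left hFtop).1 hchain)


-- key numeric inequality, real version
lemma keyIneqR (j k : ℕ) : (2:ℝ)^(k+1) * (16⁻¹:ℝ)^(max j k) ≤ 2 * 4⁻¹^j * 2⁻¹^k := by
  rcases le_total j k with hjk | hjk
  · rw [max_eq_right hjk]
    have h1 : (4⁻¹:ℝ)^k ≤ 4⁻¹^j := pow_le_pow_of_le_one (by norm_num) (by norm_num) hjk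
    calc (2:ℝ)^(k+1) * 16⁻¹^k = 2 * (2*16⁻¹)^k := by rw [mul_pow]; try ring
      _ = 2 * (4⁻¹*2⁻¹)^k := by norm_num
      _ = 2 * (4⁻¹^k * 2⁻¹^k) := by rw [mul_pow]
      _ ≤ 2 * (4⁻¹^j * 2⁻¹^k) := by gcongr
      _ = 2 * 4⁻¹^j * 2⁻¹^k := by ring
  · rw [max_eq_left hjk]
    have h1 : (4⁻¹:ℝ)^j ≤ 4⁻¹^k := pow_le_pow_of_le_one (by norm_num) (by norm_num) hjk
    calc (2:ℝ)^(k+1) * 16⁻¹^j = 2 * (4⁻¹^j * (2^k * 4⁻¹^j)) := by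
          rw [show (16⁻¹:ℝ) = 4⁻¹*4⁻¹ by norm_num, mul_pow]; try ring
      _ ≤ 2 * (4⁻¹^j * (2^k * 4⁻¹^k)) := by gcongr
      _ = 2 * (4⁻¹^j * (2*4⁻¹)^k) := by rw [mul_pow]; try ring
      _ = 2 * (4⁻¹^j * 2⁻¹^k) := by norm_num
      _ = 2 * 4⁻¹^j * 2⁻¹^k := by ring

lemma keyIneq (j k : ℕ) : (2:ℝ≥0∞)^(k+1) * (16⁻¹:ℝ≥0∞)^(max j k) ≤ 2 * 4⁻¹^j * 2⁻¹^k := by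
  have e2 : (2:ℝ≥0∞) = ENNReal.ofReal 2 := by simp
  have e16 : (16⁻¹:ℝ≥0∞) = ENNReal.ofReal 16⁻¹ := by
    rw [ENNReal.ofReal_inv_of_pos (by norm_num)]; norm_num
  have e4 : (4⁻¹:ℝ≥0∞) = ENNReal.ofReal 4⁻¹ := by
    rw [ENNReal.ofReal_inv_of_pos (by norm_num)]; norm_num
  have e2' : (2⁻¹:ℝ≥0∞) = ENNReal.ofReal 2⁻¹ := by
    rw [ENNReal.ofReal_inv_of_pos (by norm_num)]; norm_num
  rw [e16, e4, e2', e2, ← ENNReal.ofReal_pow (by norm_num), ← ENNReal.ofReal_pow (by norm_num),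
    ← ENNReal.ofReal_pow (by norm_num), ← ENNReal.ofReal_pow (by norm_num),
    ← ENNReal.ofReal_mul (by positivity), ← ENNReal.ofReal_mul (by positivity),
    ← ENNReal.ofReal_mul (by positivity)]
  exact ENNReal.ofReal_le_ofReal (keyIneqR j k)


lemma g_construction (h : ℝ → ℝ) (hh : IsDimFun h) (τ : ℕ → ℝ)
    (hτpos : ∀ n, 0 < τ n) (hhτ : ∀ n, h (τ n) ≤ (4⁻¹:ℝ)^n) :
    ∃ g : ℝ → ℝ, IsDimFun g ∧ DimLT g h ∧
      (∀ t, 0 < t → h t ≤ g t) ∧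
      (∀ k t, 0 < t → τ (k+1) < t → g t ≤ 2^(k+1) * h t) ∧
      (h 0 ≤ 0 → g 0 ≤ 0) ∧ (g 0 ≤ max (h 0) (h (τ 0))) := by
  obtain ⟨hcont, hmono, hpos, hlim⟩ := hh
  set a : ℕ → ℝ → ℝ := fun n t => 2^n * max (h t) (h (τ n)) with ha
  have hbdd : ∀ t : ℝ, BddBelow (range fun n => a n t) := by
    intro t
    refine ⟨0, fun x hx => ?_⟩
    obtain ⟨n, rfl⟩ := hx
    have : (0:ℝ) < h (τ n) := hpos _ (hτpos n)
    have : (0:ℝ) ≤ max (h t) (h (τ n)) := le_trans this.le (le_max_right _ _)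
    positivity
  set g : ℝ → ℝ := fun t => ⨅ n, a n t with hg
  have g_le : ∀ t n, g t ≤ a n t := fun t n => ciInf_le (hbdd t) n
  have le_g : ∀ {t c}, (∀ n, c ≤ a n t) → c ≤ g t := fun hc => le_ciInf hc
  have h_le_a : ∀ t, 0 < t → ∀ n, h t ≤ a n t := by
    intro t ht n
    calc h t ≤ max (h t) (h (τ n)) := le_max_left _ _
      _ = 1 * max (h t) (h (τ n)) := (one_mul _).symm
      _ ≤ 2^n * max (h t) (h (τ n)) := by
          have h1 : (0:ℝ) < h (τ n) := hpos _ (hτpos n)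
          have h2 : (0:ℝ) ≤ max (h t) (h (τ n)) := le_trans h1.le (le_max_right _ _)
          exact mul_le_mul_of_nonneg_right (one_le_pow₀ one_le_two) h2
  have h_le_g : ∀ t, 0 < t → h t ≤ g t := fun t ht => le_g (h_le_a t ht)
  have g_pos : ∀ t, 0 < t → 0 < g t := fun t ht => lt_of_lt_of_le (hpos t ht) (h_le_g t ht)
  have a_mono : ∀ n, MonotoneOn (a n) (Ioi 0) := by
    intro n s hs t ht hst
    have : max (h s) (h (τ n)) ≤ max (h t) (h (τ n)) :=
      max_le_max (hmono hs ht hst) le_rfl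
    exact mul_le_mul_of_nonneg_left this (by positivity)
  have g_mono : MonotoneOn g (Ioi 0) := by
    intro s hs t ht hst
    exact le_g fun n => (g_le s n).trans (a_mono n hs ht hst)
  -- bound: g t ≤ 2^n * h (τ n) for 0 < t ≤ τ n
  have g_le_small : ∀ n t, 0 < t → t ≤ τ n → g t ≤ 2^n * h (τ n) := by
    intro n t ht htn
    calc g t ≤ a n t := g_le t n
      _ = 2^n * max (h t) (h (τ n)) := rfl
      _ = 2^n * h (τ n) := by
          rw [max_eq_right (hmono (mem_Ioi.2 ht) (mem_Ioi.2 (hτpos n)) htn)]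
  -- block bound
  have g_le_block : ∀ k t, 0 < t → τ (k+1) < t → g t ≤ 2^(k+1) * h t := by
    intro k t ht htk
    calc g t ≤ a (k+1) t := g_le t (k+1)
      _ = 2^(k+1) * max (h t) (h (τ (k+1))) := rfl
      _ = 2^(k+1) * h t := by
          rw [max_eq_left (hmono (mem_Ioi.2 (hτpos _)) (mem_Ioi.2 ht) htk.le)]
  -- g at 0 when h 0 ≤ 0
  have g_zero : h 0 ≤ 0 → g 0 ≤ 0 := by
    intro h0
    have hub : ∀ n, g 0 ≤ (2⁻¹:ℝ)^n := by
      intro n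
      calc g 0 ≤ a n 0 := g_le 0 n
        _ = 2^n * max (h 0) (h (τ n)) := rfl
        _ = 2^n * h (τ n) := by rw [max_eq_right (h0.trans (hpos _ (hτpos n)).le)]
        _ ≤ 2^n * (4⁻¹:ℝ)^n := by
            exact mul_le_mul_of_nonneg_left (hhτ n) (by positivity)
        _ = (2⁻¹:ℝ)^n := by
            rw [← mul_pow]; norm_num
    by_contra hcon
    push_neg at hcon
    obtain ⟨n, hn⟩ := exists_pow_lt_of_lt_one hcon (by norm_num : (2⁻¹:ℝ) < 1)
    exact absurd (hub n) (not_le.2 hn)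
  have g_zero_le : g 0 ≤ max (h 0) (h (τ 0)) := by
    have h00 : a 0 0 = max (h 0) (h (τ 0)) := by simp [ha]
    exact (g_le 0 0).trans_eq h00
  -- lower bound for DimLT
  have g_lower : ∀ N : ℕ, ∃ ρ > 0, ∀ t, 0 < t → t < ρ → 2^N * h t ≤ g t := by
    intro N
    set c : ℝ := (Finset.range (N+1)).inf' (Finset.nonempty_range_add_one)
      (fun n => 2^n * h (τ n)) with hc
    have hcpos : 0 < c := by
      rw [hc]
      obtain ⟨i, hi, hieq⟩ := Finset.exists_mem_eq_inf' Finset.nonempty_range_add_one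
        (fun n => (2:ℝ)^n * h (τ n))
      rw [hieq]
      have := hpos _ (hτpos i)
      positivity
    have hev : ∀ᶠ t in 𝓝[>] (0:ℝ), h t < c / 2^N := by
      have : Iio (c / 2^N) ∈ 𝓝 (0:ℝ) := Iio_mem_nhds (by positivity)
      exact hlim.eventually (eventually_iff_exists_mem.2 ⟨Iio (c / 2^N), this, fun x hx => hx⟩)
    rw [eventually_nhdsWithin_iff] at hev
    obtain ⟨ρ, hρpos, hρ⟩ := Metric.eventually_nhds_iff_ball.1 hev
    refine ⟨ρ, hρpos, fun t ht htρ => ?_⟩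
    have hth : h t < c / 2^N := hρ t (by simpa [Real.ball_eq_Ioo] using ⟨by linarith, htρ⟩) ht
    refine le_g fun n => ?_
    rcases le_or_gt N n with hn | hn
    · calc 2^N * h t ≤ 2^n * h t :=
            mul_le_mul_of_nonneg_right (pow_le_pow_right₀ one_le_two hn) (hpos t ht).le
        _ ≤ a n t := mul_le_mul_of_nonneg_left (le_max_left _ _) (by positivity)
    · have hmem : n ∈ Finset.range (N+1) := Finset.mem_range.2 (by omega)
      calc 2^N * h t ≤ c := by
            have h2 := (lt_div_iff₀ (by positivity : (0:ℝ) < 2^N)).1 hth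
            nlinarith [h2]
        _ ≤ 2^n * h (τ n) := Finset.inf'_le _ hmem
        _ ≤ a n t := mul_le_mul_of_nonneg_left (le_max_right _ _) (by positivity)
  -- tendsto g at 0
  have g_tendsto : Tendsto g (𝓝[>] (0:ℝ)) (𝓝 0) := by
    rw [Metric.tendsto_nhdsWithin_nhds]
    intro ε hε
    obtain ⟨n, hn⟩ := exists_pow_lt_of_lt_one hε (by norm_num : (2⁻¹:ℝ) < 1)
    refine ⟨τ n, hτpos n, ?_⟩
    intro t ht hd
    rw [mem_Ioi] at ht
    rw [Real.dist_eq, sub_zero, abs_of_pos ht] at hd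
    rw [Real.dist_eq, sub_zero, abs_of_pos (g_pos t ht)]
    calc g t ≤ 2^n * h (τ n) := g_le_small n t ht hd.le
      _ ≤ 2^n * (4⁻¹:ℝ)^n := mul_le_mul_of_nonneg_left (hhτ n) (by positivity)
      _ = (2⁻¹:ℝ)^n := by rw [← mul_pow]; norm_num
      _ < ε := hn
  -- continuity
  have g_cont : ContinuousOn g (Ioi 0) := by
    intro t₀ ht₀mem
    have ht₀ : 0 < t₀ := ht₀mem
    set s : ℝ := t₀/2 with hsdef
    have hs : 0 < s := by positivity
    have hst : s < t₀ := by rw [hsdef]; linarith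
    set B : ℝ := max (h (t₀+1)) (h (τ 0)) with hB
    have hhs : 0 < h s := hpos s hs
    obtain ⟨N, hN⟩ := pow_unbounded_of_one_lt (B / h s) (one_lt_two (α := ℝ))
    have hBle : B ≤ 2^N * h s := by
      rw [div_lt_iff₀ hhs] at hN
      nlinarith [hN]
    set F : ℝ → ℝ := fun t =>
      (Finset.range (N+1)).inf' Finset.nonempty_range_add_one (fun n => a n t) with hF
    have hFg : ∀ t, s < t → t < t₀+1 → g t = F t := by
      intro t hts htt
      have htpos : 0 < t := hs.trans hts
      refine le_antisymm (Finset.le_inf' _ _ fun n _ => g_le t n) (le_g fun n => ?_)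
      rcases lt_or_ge n (N+1) with hn | hn
      · exact Finset.inf'_le _ (Finset.mem_range.2 hn)
      · calc F t ≤ a 0 t := Finset.inf'_le _ (Finset.mem_range.2 (by omega))
          _ = max (h t) (h (τ 0)) := by simp [ha]
          _ ≤ B := max_le_max (hmono (mem_Ioi.2 htpos) (mem_Ioi.2 (by linarith)) htt.le) le_rfl
          _ ≤ 2^N * h s := hBle
          _ ≤ 2^n * h t := by
              have h1 : (2:ℝ)^N ≤ 2^n := pow_le_pow_right₀ one_le_two (by omega)
              have h2 : h s ≤ h t := hmono (mem_Ioi.2 hs) (mem_Ioi.2 htpos) hts.le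
              exact mul_le_mul h1 h2 hhs.le (by positivity)
          _ ≤ a n t := mul_le_mul_of_nonneg_left (le_max_left _ _) (by positivity)
    have hFcont : ContinuousOn F (Ioi 0) := by
      refine ContinuousOn.finset_inf'_apply _ fun n _ => ?_
      exact continuousOn_const.mul ((hcont.sup continuousOn_const) : ContinuousOn (fun t => max (h t) _) _)
    have hmemIoo : Ioo s (t₀+1) ∈ 𝓝 t₀ := Ioo_mem_nhds hst (by linarith)
    refine (hFcont t₀ ht₀mem).congr_of_eventuallyEq ?_ (hFg t₀ hst (by linarith))
    exact Filter.eventually_of_mem (mem_nhdsWithin_of_mem_nhds hmemIoo)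
      (fun x hx => hFg x hx.1 hx.2)
  refine ⟨g, ⟨g_cont, g_mono, g_pos, g_tendsto⟩, ?_, h_le_g, g_le_block, g_zero, g_zero_le⟩
  -- DimLT
  rw [DimLT, Metric.tendsto_nhdsWithin_nhds]
  intro ε hε
  obtain ⟨N, hN⟩ := exists_pow_lt_of_lt_one hε (by norm_num : (2⁻¹:ℝ) < 1)
  obtain ⟨ρ, hρpos, hρ⟩ := g_lower N
  refine ⟨ρ, hρpos, ?_⟩
  intro t ht hd
  rw [mem_Ioi] at ht
  rw [Real.dist_eq, sub_zero, abs_of_pos ht] at hd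
  have hgt := hρ t ht hd
  have hht := hpos t ht
  have hgpos := g_pos t ht
  have key : h t / g t ≤ (2⁻¹:ℝ)^N := by
    rw [div_le_iff₀ hgpos]
    calc h t = (2⁻¹:ℝ)^N * (2^N * h t) := by
          rw [← mul_assoc, ← mul_pow]; norm_num
      _ ≤ (2⁻¹:ℝ)^N * g t := mul_le_mul_of_nonneg_left hgt (by positivity)
      _ = (2⁻¹:ℝ)^N * g t := rfl
  rw [Real.dist_eq, sub_zero, abs_of_pos (div_pos hht hgpos)]
  exact lt_of_le_of_lt key hN


/-- Theorem 1(a) of the paper, due to Besicovitch. -/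
theorem hausdorff_zero_down (d : ℕ) (h : ℝ → ℝ) (hh : IsDimFun h)
    (E : Set (EuclideanSpace ℝ (Fin d))) (hE : hausdorffGauge d h E = 0) :
    ∃ g : ℝ → ℝ, IsDimFun g ∧ DimLT g h ∧ hausdorffGauge d g E = 0 := by
  classical
  obtain ⟨hcont, hmono, hpos, hlim⟩ := hh
  have hh' : IsDimFun h := ⟨hcont, hmono, hpos, hlim⟩
  have hE' : MeasureTheory.Measure.mkMetric
      (fun r : ℝ≥0∞ => ENNReal.ofReal (h r.toReal)) E = 0 := hE
  -- small-value thresholds for h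
  have hsmall : ∀ c : ℝ, 0 < c → ∃ τ : ℝ, 0 < τ ∧ τ ≤ c ∧ h τ ≤ c := by
    intro c hc
    have hev : ∀ᶠ t in 𝓝[>] (0:ℝ), h t < c :=
      hlim.eventually (eventually_iff_exists_mem.2 ⟨Iio c, Iio_mem_nhds hc, fun x hx => hx⟩)
    rw [eventually_nhdsWithin_iff] at hev
    obtain ⟨δ, hδpos, hδ⟩ := Metric.eventually_nhds_iff_ball.1 hev
    refine ⟨min (δ/2) c, by positivity, min_le_right _ _, ?_⟩
    have hmem : min (δ/2) c ∈ ball (0:ℝ) δ := by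
      rw [mem_ball, Real.dist_eq, sub_zero, abs_of_pos (by positivity)]
      calc min (δ/2) c ≤ δ/2 := min_le_left _ _
        _ < δ := by linarith
    exact (hδ _ hmem (mem_Ioi.2 (by positivity))).le
  obtain ⟨τ₀, hτ₀pos, hτ₀le, hhτ₀⟩ := hsmall 1 one_pos
  -- covers
  have hcovers : ∀ j : ℕ, ∃ t : ℕ → Set (EuclideanSpace ℝ (Fin d)), E ⊆ ⋃ n, t n ∧
      (∀ n, EMetric.diam (t n) ≤ ENNReal.ofReal (τ₀ * 2⁻¹^j)) ∧
      ∑' n, ⨆ _ : (t n).Nonempty, ENNReal.ofReal (h (EMetric.diam (t n)).toReal)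
        ≤ (16⁻¹:ℝ≥0∞)^j := by
    intro j
    exact covers_of_mkMetric_zero _ E hE'
      (by rw [ENNReal.ofReal_pos]; exact mul_pos hτ₀pos (by positivity))
      (ENNReal.pow_pos (ENNReal.inv_pos.2 (by norm_num)) j)
  choose C hC1 hC2 hC3 using hcovers
  set f : ℕ → ℕ → ℝ≥0∞ := fun j n =>
    ⨆ _ : (C j n).Nonempty, ENNReal.ofReal (h (EMetric.diam (C j n)).toReal) with hfdef
  set D : ℕ → ℕ → ℝ := fun j n => (EMetric.diam (C j n)).toReal with hDdef
  have hftop : ∀ j, ∑' n, f j n ≠ ⊤ := by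
    intro j
    exact ((hC3 j).trans_lt (ENNReal.pow_lt_top (ENNReal.inv_lt_top.2 (by norm_num)))).ne
  have hDnn : ∀ j n, 0 ≤ D j n := fun j n => ENNReal.toReal_nonneg
  have hDle : ∀ j n, D j n ≤ τ₀ * 2⁻¹^j := fun j n =>
    ENNReal.toReal_le_of_le_ofReal (by positivity) (hC2 j n)
  -- choose τ
  have hτex : ∀ n : ℕ, ∃ τ : ℝ, 0 < τ ∧ τ ≤ 2⁻¹^n ∧ h τ ≤ 4⁻¹^n ∧
      ∀ j ≤ n, (∑' i, Set.indicator {i | 0 < D j i ∧ D j i ≤ τ} (f j) i)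
        ≤ (16⁻¹:ℝ≥0∞)^n := by
    intro n
    have htails : ∀ j : ℕ, ∃ ρ : ℝ, 0 < ρ ∧
        (∑' i, Set.indicator {i | 0 < D j i ∧ D j i ≤ ρ} (f j) i) ≤ (16⁻¹:ℝ≥0∞)^n :=
      fun j => tail_small (f j) (D j) (hftop j)
        (ENNReal.pow_pos (ENNReal.inv_pos.2 (by norm_num)) n)
    choose T hT1 hT2 using htails
    obtain ⟨σ, hσpos, hσle, hσh⟩ := hsmall (min ((4:ℝ)⁻¹^n) ((2:ℝ)⁻¹^n)) (by positivity)
    set ρmin : ℝ := (Finset.range (n+1)).inf' Finset.nonempty_range_add_one T with hρmin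
    have hρminpos : 0 < ρmin := by
      obtain ⟨i, hi, hieq⟩ := Finset.exists_mem_eq_inf' Finset.nonempty_range_add_one T
      rw [hρmin, hieq]; exact hT1 i
    refine ⟨min ρmin σ, by positivity, ?_, ?_, ?_⟩
    · exact le_trans (min_le_right _ _) (hσle.trans (min_le_right _ _))
    · rcases le_total ρmin σ with hc | hc
      · rw [min_eq_left hc]
        have : h ρmin ≤ h σ := hmono (mem_Ioi.2 hρminpos) (mem_Ioi.2 hσpos) hc
        exact this.trans (hσh.trans (min_le_left _ _))
      · rw [min_eq_right hc]
        exact hσh.trans (min_le_left _ _)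
    · intro j hj
      have hsub : {i | 0 < D j i ∧ D j i ≤ min ρmin σ} ⊆ {i | 0 < D j i ∧ D j i ≤ T j} := by
        intro x hx
        exact ⟨hx.1, hx.2.trans
          ((min_le_left _ _).trans (Finset.inf'_le T (Finset.mem_range.2 (by omega))))⟩
      refine le_trans (ENNReal.tsum_le_tsum fun i =>
        Set.indicator_le_indicator_of_subset hsub (fun _ => zero_le) i) (hT2 j)
  choose τc hτc1 hτc2 hτc3 hτc4 using hτex
  set τ : ℕ → ℝ := fun n => if n = 0 then τ₀ else τc n with hτdef
  have hτpos : ∀ n, 0 < τ n := by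
    intro n; by_cases h0 : n = 0 <;> simp [hτdef, h0, hτ₀pos, hτc1 n]
  have hτle : ∀ n, 1 ≤ n → τ n ≤ 2⁻¹^n := by
    intro n hn
    have : n ≠ 0 := by omega
    simp only [hτdef, if_neg this]; exact hτc2 n
  have hhτ : ∀ n, h (τ n) ≤ (4⁻¹:ℝ)^n := by
    intro n
    by_cases h0 : n = 0
    · subst h0; simpa [hτdef] using hhτ₀
    · simp only [hτdef, if_neg h0]; exact hτc3 n
  have hτtail : ∀ k, 1 ≤ k → ∀ j ≤ k,
      (∑' i, Set.indicator {i | 0 < D j i ∧ D j i ≤ τ k} (f j) i) ≤ (16⁻¹:ℝ≥0∞)^k := by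
    intro k hk j hj
    have hne : k ≠ 0 := by omega
    simp only [hτdef, if_neg hne]
    exact hτc4 k j hj
  -- build g
  obtain ⟨g, hgdim, hgdlt, h_le_g, g_block, g_zero, g_zero_le⟩ :=
    g_construction h hh' τ hτpos hhτ
  refine ⟨g, hgdim, hgdlt, ?_⟩
  -- constant K
  set K : ℝ≥0∞ := ENNReal.ofReal (g 0) / ENNReal.ofReal (h 0) with hKdef
  have hKtop : K ≠ ⊤ := by
    rcases le_or_gt (h 0) 0 with h0 | h0
    · have hg0 : ENNReal.ofReal (g 0) = 0 := ENNReal.ofReal_eq_zero.2 (g_zero h0)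
      simp [hKdef, hg0]
    · exact (ENNReal.div_lt_top ENNReal.ofReal_ne_top
        (by simp [ENNReal.ofReal_eq_zero, not_le, h0])).ne
  have hKbound : ENNReal.ofReal (g 0) ≤ K * ENNReal.ofReal (h 0) := by
    rcases le_or_gt (h 0) 0 with h0 | h0
    · simp [ENNReal.ofReal_eq_zero.2 (g_zero h0)]
    · rw [hKdef, ENNReal.div_mul_cancel
        (by simp [ENNReal.ofReal_eq_zero, not_le, h0]) ENNReal.ofReal_ne_top]
  -- show the g-measure is zero
  show MeasureTheory.Measure.mkMetric (fun r : ℝ≥0∞ => ENNReal.ofReal (g r.toReal)) E = 0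
  apply mkMetric_zero_of_covers
  intro r hr ε hε
  -- choose j
  have hj1 : ∃ j : ℕ, ENNReal.ofReal (τ₀ * 2⁻¹^j) ≤ r := by
    set c : ℝ≥0∞ := min r 1 with hc
    have hc0 : c ≠ 0 := (lt_min hr zero_lt_one).ne'
    have hctop : c ≠ ⊤ := ((min_le_right r 1).trans_lt ENNReal.one_lt_top).ne
    have hcr : 0 < c.toReal := ENNReal.toReal_pos hc0 hctop
    obtain ⟨j, hj⟩ := exists_pow_lt_of_lt_one (div_pos hcr hτ₀pos) (by norm_num : (2⁻¹:ℝ) < 1)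
    refine ⟨j, ?_⟩
    have : τ₀ * 2⁻¹^j < c.toReal := by
      rw [lt_div_iff₀ hτ₀pos] at hj; linarith [hj]
    calc ENNReal.ofReal (τ₀ * 2⁻¹^j) ≤ ENNReal.ofReal c.toReal :=
          ENNReal.ofReal_le_ofReal this.le
      _ = c := ENNReal.ofReal_toReal hctop
      _ ≤ r := min_le_left _ _
  have hj2 : ∃ j : ℕ, (K + 4) * (4⁻¹:ℝ≥0∞)^j ≤ ε := by
    have hK4 : (K + 4 : ℝ≥0∞) ≠ 0 := by simp
    have hK4top : (K + 4 : ℝ≥0∞) ≠ ⊤ := by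
      simp [ENNReal.add_eq_top, hKtop]
    have hεd : (0:ℝ≥0∞) < ε / (K + 4) := ENNReal.div_pos hε.ne' hK4top
    obtain ⟨j, hj⟩ := ENNReal.exists_inv_two_pow_lt hεd.ne'
    refine ⟨j, ?_⟩
    have h4le : (4⁻¹:ℝ≥0∞)^j ≤ 2⁻¹^j :=
      pow_le_pow_left' (ENNReal.inv_le_inv.2 (by norm_num)) j
    calc (K + 4) * (4⁻¹:ℝ≥0∞)^j ≤ (K + 4) * (ε / (K + 4)) := by
          exact mul_le_mul_right (h4le.trans hj.le) _
      _ = ε := ENNReal.mul_div_cancel hK4 hK4top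
  obtain ⟨j₁, hj₁⟩ := hj1
  obtain ⟨j₂, hj₂⟩ := hj2
  set j : ℕ := max j₁ j₂ with hjdef
  have hjr : ENNReal.ofReal (τ₀ * 2⁻¹^j) ≤ r := by
    refine le_trans (ENNReal.ofReal_le_ofReal ?_) hj₁
    have : (2⁻¹:ℝ)^j ≤ 2⁻¹^j₁ :=
      pow_le_pow_of_le_one (by norm_num) (by norm_num) (le_max_left _ _)
    nlinarith [this, hτ₀pos]
  have hjε : (K + 4) * (4⁻¹:ℝ≥0∞)^j ≤ ε := by
    refine le_trans (mul_le_mul_right ?_ _) hj₂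
    exact pow_le_pow_right_of_le_one' (ENNReal.inv_le_one.2 (by norm_num)) (le_max_right _ _)
  refine ⟨C j, hC1 j, fun n => (hC2 j n).trans hjr, ?_⟩
  -- the master sum bound
  set Z : Set ℕ := {i | D j i = 0} with hZdef
  set B : ℕ → Set ℕ := fun k => {i | τ (k+1) < D j i ∧ D j i ≤ τ k} with hBdef
  have pointwise : ∀ n, (⨆ _ : (C j n).Nonempty, ENNReal.ofReal (g (EMetric.diam (C j n)).toReal)) ≤
      K * Z.indicator (f j) n + ∑' k, (2:ℝ≥0∞)^(k+1) * (B k).indicator (f j) n := by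
    intro n
    by_cases hne : (C j n).Nonempty
    swap
    · simp [hne]
    rcases (hDnn j n).eq_or_lt with h0 | hDpos
    · -- diameter zero
      have hZ : n ∈ Z := by simp [hZdef, ← h0]
      have e1 : (⨆ _ : (C j n).Nonempty, ENNReal.ofReal (g (EMetric.diam (C j n)).toReal))
          = ENNReal.ofReal (g 0) := by rw [iSup_pos hne, show (EMetric.diam (C j n)).toReal = D j n from rfl, ← h0]
      have e2 : Z.indicator (f j) n = ENNReal.ofReal (h 0) := by
        rw [Set.indicator_of_mem hZ]
        simp only [hfdef]
        rw [iSup_pos hne, show (EMetric.diam (C j n)).toReal = D j n from rfl, ← h0]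
      rw [e1, e2]
      exact le_trans hKbound le_self_add
    · -- positive diameter: find its block
      obtain ⟨M, hM⟩ := exists_pow_lt_of_lt_one hDpos (by norm_num : (2⁻¹:ℝ) < 1)
      set P : ℕ → Prop := fun m => D j n ≤ τ m with hPdef
      have hP0 : P 0 := by
        rw [hPdef]
        simp only [hτdef, if_pos rfl]
        calc D j n ≤ τ₀ * 2⁻¹^j := hDle j n
          _ ≤ τ₀ * 1 := by
              have : (2⁻¹:ℝ)^j ≤ 1 := pow_le_one₀ (by norm_num) (by norm_num)
              nlinarith [hτ₀pos]
          _ = τ₀ := mul_one _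
      have hMbig : ∀ m, M+1 ≤ m → ¬ P m := by
        intro m hm hcon
        have h1 : τ m ≤ 2⁻¹^m := hτle m (by omega)
        have h2 : (2⁻¹:ℝ)^m ≤ 2⁻¹^M :=
          pow_le_pow_of_le_one (by norm_num) (by norm_num) (by omega)
        rw [hPdef] at hcon
        linarith [hcon, hM]
      set k : ℕ := Nat.findGreatest P (M+1) with hkdef
      have hPk : P k := Nat.findGreatest_spec (Nat.zero_le _) hP0
      have hPk1 : ¬ P (k+1) := by
        rcases le_or_gt (k+1) (M+1) with hle | hlt
        · exact Nat.findGreatest_is_greatest (Nat.lt_succ_self _) hle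
        · exact hMbig (k+1) (by omega)
      have hBk : n ∈ B k := ⟨not_le.1 hPk1, hPk⟩
      calc (⨆ _ : (C j n).Nonempty, ENNReal.ofReal (g (EMetric.diam (C j n)).toReal))
          = ENNReal.ofReal (g (D j n)) := by rw [iSup_pos hne]
        _ ≤ ENNReal.ofReal (2^(k+1) * h (D j n)) :=
            ENNReal.ofReal_le_ofReal (g_block k (D j n) hDpos (not_le.1 hPk1))
        _ = (2:ℝ≥0∞)^(k+1) * ENNReal.ofReal (h (D j n)) := by
            rw [ENNReal.ofReal_mul (by positivity), ENNReal.ofReal_pow (by norm_num)]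
            norm_num
        _ = (2:ℝ≥0∞)^(k+1) * (B k).indicator (f j) n := by
            rw [Set.indicator_of_mem hBk]
            simp only [hfdef]
            rw [iSup_pos hne]
        _ ≤ ∑' k', (2:ℝ≥0∞)^(k'+1) * (B k').indicator (f j) n := ENNReal.le_tsum k
        _ ≤ _ := le_add_self
  calc ∑' n, (⨆ _ : (C j n).Nonempty, ENNReal.ofReal (g (EMetric.diam (C j n)).toReal))
      ≤ ∑' n, (K * Z.indicator (f j) n + ∑' k, (2:ℝ≥0∞)^(k+1) * (B k).indicator (f j) n) :=
        ENNReal.tsum_le_tsum pointwise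
    _ = K * (∑' n, Z.indicator (f j) n)
        + ∑' n, ∑' k, (2:ℝ≥0∞)^(k+1) * (B k).indicator (f j) n := by
        rw [ENNReal.tsum_add, ENNReal.tsum_mul_left]
    _ = K * (∑' n, Z.indicator (f j) n)
        + ∑' k, (2:ℝ≥0∞)^(k+1) * ∑' n, (B k).indicator (f j) n := by
        rw [ENNReal.tsum_comm]
        congr 1
        exact tsum_congr fun k => ENNReal.tsum_mul_left
    _ ≤ K * (16⁻¹:ℝ≥0∞)^j + ∑' k, (2:ℝ≥0∞)^(k+1) * (16⁻¹:ℝ≥0∞)^(max j k) := by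
        refine add_le_add (mul_le_mul_right ?_ _) (ENNReal.tsum_le_tsum fun k =>
          mul_le_mul_right ?_ _)
        · exact le_trans (ENNReal.tsum_le_tsum fun n => Set.indicator_le_self _ _ n) (hC3 j)
        · rcases le_or_gt k j with hkj | hjk
          · rw [max_eq_left hkj]
            refine le_trans (ENNReal.tsum_le_tsum fun n => Set.indicator_le_self _ _ n) (hC3 j)
          · rw [max_eq_right hjk.le]
            refine le_trans (ENNReal.tsum_le_tsum fun i =>
              Set.indicator_le_indicator_of_subset ?_ (fun _ => zero_le) i)
              (hτtail k (by omega) j hjk.le)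
            intro x hx
            exact ⟨lt_trans (hτpos (k+1)) hx.1, hx.2⟩
    _ ≤ K * (4⁻¹:ℝ≥0∞)^j + ∑' k, 2 * (4⁻¹:ℝ≥0∞)^j * (2⁻¹:ℝ≥0∞)^k := by
        refine add_le_add (mul_le_mul_right ?_ _) (ENNReal.tsum_le_tsum fun k => keyIneq j k)
        exact pow_le_pow_left' (ENNReal.inv_le_inv.2 (by norm_num)) j
    _ = K * (4⁻¹:ℝ≥0∞)^j + 2 * (4⁻¹:ℝ≥0∞)^j * 2 := by
        rw [ENNReal.tsum_mul_left, ENNReal.tsum_geometric, ENNReal.one_sub_inv_two]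
        simp
    _ = (K + 4) * (4⁻¹:ℝ≥0∞)^j := by ring
    _ ≤ ε := hjε
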